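/- Define Ξ₂^{(n)}(X₁,X₂) by 2Ξ₂^{(n)}(X₁,X₂) = (Θ₊^{(n)}(X₁)Θ₊^{(n)}(X₂) − Θ₋^{(n)}(X₁)Θ₋^{(n)}(X₂))·(X₁−X₂)/(X₁+X₂) + (−1)^n (Θ₊^{(n)}(X₁)Θ₋^{(n)}(X₂) − Θ₊^{(n)}(X₂)Θ₋^{(n)}(X₁)). Then Ξ₂^{(n)} is a polynomial in X₁, X₂, x₁,…,xₙ (the apparent pole at X₁ = −X₂ cancels), it is antisymmetric under X₁ ↔ X₂, and it vanishes when X₂ = ± x^{−1} and (x_{n−1}, x_n) = (x, −x). -/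
import Mathlib


/-- `Θ₊^{(n)}(X) = ∏_{j=1}^n (1 + X x_j)`. -/
noncomputable def ThetaP {N : ℕ} (x : Fin N → ℂ) (X : ℂ) : ℂ := ∏ j, (1 + X * x j)

/-- `Θ₋^{(n)}(X) = ∏_{j=1}^n (1 − X x_j)`. -/
noncomputable def ThetaM {N : ℕ} (x : Fin N → ℂ) (X : ℂ) : ℂ := ∏ j, (1 - X * x j)

/-- `Ξ₂^{(n)}(X₁,X₂)`, defined (away from `X₁ + X₂ = 0`) by
`2Ξ₂ = (Θ₊(X₁)Θ₊(X₂) − Θ₋(X₁)Θ₋(X₂))(X₁−X₂)/(X₁+X₂)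
      + (−1)^n (Θ₊(X₁)Θ₋(X₂) − Θ₊(X₂)Θ₋(X₁))`. -/
noncomputable def Xi2 {N : ℕ} (x : Fin N → ℂ) (X1 X2 : ℂ) : ℂ :=
  (1 / 2 : ℂ) *
    ((ThetaP x X1 * ThetaP x X2 - ThetaM x X1 * ThetaM x X2) *(X1 - X2) / (X1 + X2)
      + (-1 : ℂ) ^ N * (ThetaP x X1 * ThetaM x X2 - ThetaP x X2 * ThetaM x X1))

open MvPolynomial

/-- polynomial version of Θ₊. -/
noncomputable def TPpoly (N : ℕ) (i : Fin 2) : MvPolynomial (Fin 2 ⊕ Fin N) ℂ :=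
  ∏ j, (1 + X (Sum.inl i) * X (Sum.inr j))

/-- polynomial version of Θ₋. -/
noncomputable def TMpoly (N : ℕ) (i : Fin 2) : MvPolynomial (Fin 2 ⊕ Fin N) ℂ :=
  ∏ j, (1 - X (Sum.inl i) * X (Sum.inr j))

/-- substitution X₁ ↦ -X₂. -/
noncomputable def sigH (N : ℕ) :
    MvPolynomial (Fin 2 ⊕ Fin N) ℂ →ₐ[ℂ] MvPolynomial (Fin 2 ⊕ Fin N) ℂ :=
  aeval (fun v => if v = Sum.inl 0 then -X (Sum.inl 1) else X v)

lemma sigH_dvd (N : ℕ) (p : MvPolynomial (Fin 2 ⊕ Fin N) ℂ) :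
    (X (Sum.inl 0) + X (Sum.inl 1)) ∣ p - sigH N p := by
  induction p using MvPolynomial.induction_on with
  | C a => simp [sigH]
  | add p q hp hq =>
      have h := dvd_add hp hq
      have : p + q - sigH N (p + q) = (p - sigH N p) + (q - sigH N q) := by
        rw [map_add]; ring
      rw [this]; exact h
  | mul_X p v hp =>
      have key : (X (Sum.inl 0) + X (Sum.inl 1)) ∣
          ((X v : MvPolynomial (Fin 2 ⊕ Fin N) ℂ) - sigH N (X v)) := by
        by_cases h : v = Sum.inl 0
        · subst h
          simp [sigH, sub_neg_eq_add]
        · simp [sigH, h]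
      have expand : p * X v - sigH N (p * X v)
          = p * (X v - sigH N (X v)) + sigH N (X v) * (p - sigH N p) := by
        rw [map_mul]; ring
      rw [expand]
      exact dvd_add (Dvd.dvd.mul_left key p) (Dvd.dvd.mul_left hp _)

lemma sigH_TP0 (N : ℕ) : sigH N (TPpoly N 0) = TMpoly N 1 := by
  simp only [sigH, TPpoly, TMpoly, map_prod, map_add, map_mul, map_one, aeval_X]
  refine Finset.prod_congr rfl fun j _ => ?_
  simp; ring

lemma sigH_TM0 (N : ℕ) : sigH N (TMpoly N 0) = TPpoly N 1 := by
  simp only [sigH, TPpoly, TMpoly, map_prod, map_sub, map_mul, map_one, aeval_X]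
  refine Finset.prod_congr rfl fun j _ => ?_
  simp

lemma sigH_TP1 (N : ℕ) : sigH N (TPpoly N 1) = TPpoly N 1 := by
  simp only [sigH, TPpoly, map_prod, map_add, map_mul, map_one, aeval_X]
  refine Finset.prod_congr rfl fun j _ => ?_
  simp

lemma sigH_TM1 (N : ℕ) : sigH N (TMpoly N 1) = TMpoly N 1 := by
  simp only [sigH, TMpoly, map_prod, map_sub, map_mul, map_one, aeval_X]
  refine Finset.prod_congr rfl fun j _ => ?_
  simp

lemma eval_TP0 (N : ℕ) (X1 X2 : ℂ) (x : Fin N → ℂ) :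
    eval (Sum.elim ![X1, X2] x) (TPpoly N 0) = ThetaP x X1 := by
  simp [TPpoly, ThetaP, eval_prod]

lemma eval_TP1 (N : ℕ) (X1 X2 : ℂ) (x : Fin N → ℂ) :
    eval (Sum.elim ![X1, X2] x) (TPpoly N 1) = ThetaP x X2 := by
  simp [TPpoly, ThetaP, eval_prod]

lemma eval_TM0 (N : ℕ) (X1 X2 : ℂ) (x : Fin N → ℂ) :
    eval (Sum.elim ![X1, X2] x) (TMpoly N 0) = ThetaM x X1 := by
  simp [TMpoly, ThetaM, eval_prod]

lemma eval_TM1 (N : ℕ) (X1 X2 : ℂ) (x : Fin N → ℂ) :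
    eval (Sum.elim ![X1, X2] x) (TMpoly N 1) = ThetaM x X2 := by
  simp [TMpoly, ThetaM, eval_prod]

/-- `Ξ₂^{(n)}` is a polynomial in `X₁, X₂, x₁, …, xₙ` (the apparent pole at
`X₁ = −X₂` cancels), is antisymmetric under `X₁ ↔ X₂`, and vanishes when
`X₂ = ±x^{−1}` and `(x_{n−1}, x_n) = (x, −x)`. -/
theorem Xi2_properties (N : ℕ) :
    (∃ F : MvPolynomial (Fin 2 ⊕ Fin N) ℂ,
      ∀ (X1 X2 : ℂ) (x : Fin N → ℂ), X1 + X2 ≠ 0 →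
        MvPolynomial.eval (Sum.elim ![X1, X2] x) F = Xi2 x X1 X2) ∧
    (∀ (x : Fin N → ℂ) (X1 X2 : ℂ), X1 + X2 ≠ 0 → Xi2 x X2 X1 = - Xi2 x X1 X2) ∧
    (∀ (M : ℕ) (y : Fin M → ℂ) (x X1 ε : ℂ), x ≠ 0 → (ε = 1 ∨ ε = -1) →
      X1 + ε * x⁻¹ ≠ 0 → Xi2 (Fin.append y ![x, -x]) X1 (ε * x⁻¹) = 0) := by
  refine ⟨?_, ?_, ?_⟩
  · -- polynomiality
    set A : MvPolynomial (Fin 2 ⊕ Fin N) ℂ :=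
      (TPpoly N 0 * TPpoly N 1 - TMpoly N 0 * TMpoly N 1) * (X (Sum.inl 0) - X (Sum.inl 1))
      with hA
    have hσA : sigH N A = 0 := by
      rw [hA, map_mul, map_sub, map_mul, map_mul, sigH_TP0, sigH_TP1, sigH_TM0, sigH_TM1]
      ring
    have hdvd : (X (Sum.inl 0) + X (Sum.inl 1)) ∣ A := by
      have := sigH_dvd N A
      rwa [hσA, sub_zero] at this
    obtain ⟨q, hq⟩ := hdvd
    refine ⟨C (1 / 2 : ℂ) * (q + C ((-1 : ℂ) ^ N) *
      (TPpoly N 0 * TMpoly N 1 - TPpoly N 1 * TMpoly N 0)), ?_⟩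
    intro X1 X2 x hne
    have hqeval : eval (Sum.elim ![X1, X2] x) q
        = (ThetaP x X1 * ThetaP x X2 - ThetaM x X1 * ThetaM x X2) * (X1 - X2) / (X1 + X2) := by
      have hAe : eval (Sum.elim ![X1, X2] x) A
          = (ThetaP x X1 * ThetaP x X2 - ThetaM x X1 * ThetaM x X2) * (X1 - X2) := by
        simp [hA, eval_TP0, eval_TP1, eval_TM0, eval_TM1]
      have h2 : eval (Sum.elim ![X1, X2] x) A
          = (X1 + X2) * eval (Sum.elim ![X1, X2] x) q := by
        rw [hq]; simp
      rw [eq_div_iff hne]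
      rw [← hAe, h2]; ring
    simp only [map_mul, map_add, map_sub, eval_C, eval_TP0, eval_TP1, eval_TM0, eval_TM1,
      hqeval, Xi2]
  · -- antisymmetry
    intro x X1 X2 hne
    have hne' : X2 + X1 ≠ 0 := by rwa [add_comm]
    unfold Xi2
    field_simp
    ring
  · -- vanishing
    intro M y x X1 ε hx hε hne
    have hP : ThetaP (Fin.append y ![x, -x]) (ε * x⁻¹) = 0 := by
      unfold ThetaP
      rcases hε with hε | hε
      · apply Finset.prod_eq_zero (Finset.mem_univ (Fin.natAdd M 1))
        rw [Fin.append_right]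
        simp [hε, mul_assoc, inv_mul_cancel₀ hx]
      · apply Finset.prod_eq_zero (Finset.mem_univ (Fin.natAdd M 0))
        rw [Fin.append_right]
        simp [hε, mul_assoc, inv_mul_cancel₀ hx]
    have hM : ThetaM (Fin.append y ![x, -x]) (ε * x⁻¹) = 0 := by
      unfold ThetaM
      rcases hε with hε | hε
      · apply Finset.prod_eq_zero (Finset.mem_univ (Fin.natAdd M 0))
        rw [Fin.append_right]
        simp [hε, mul_assoc, inv_mul_cancel₀ hx]
      · apply Finset.prod_eq_zero (Finset.mem_univ (Fin.natAdd M 1))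
        rw [Fin.append_right]
        simp [hε, mul_assoc, inv_mul_cancel₀ hx]
    unfold Xi2
    rw [hP, hM]
    ring
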